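/- Let n, s be positive integers with gcd(n,s)=1 and let g(x) = Σ_{i=0}^{ν} r_i x^{2^{si}} with coefficients r_i in GF(2^n) be a linearized polynomial. Then the equation g(x)=0 has at most 2^ν solutions in GF(2^n). -/

import Mathlib

open Finset

-- fixed points of x ↦ x^(2^s) in GF(2^n) are 0,1 when gcd(n,s)=1
lemma pow_iter {K : Type*} [Monoid K] (w : K) (d : ℕ) (h : w ^ 2 ^ d = w) :
    ∀ k, w ^ 2 ^ (d * k) = w := by
  intro k
  induction k with
  | zero => simp
  | succ k ih =>
    have : 2 ^ (d * (k+1)) = 2 ^ (d*k) * 2 ^ d := by rw [← pow_add]; ring_nf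
    rw [this, pow_mul, ih, h]

lemma fix_lemma (n s : ℕ) (hn : 0 < n) (hs : 0 < s) (hcop : Nat.gcd n s = 1)
    (w : GaloisField 2 n) (hw : w ^ 2 ^ s = w) : w = 0 ∨ w = 1 := by
  haveI : Fintype (GaloisField 2 n) := Fintype.ofFinite _
  have hcard : Fintype.card (GaloisField 2 n) = 2 ^ n := by
    rw [← Nat.card_eq_fintype_card, GaloisField.card 2 n hn.ne']
  have hpn : ∀ x : GaloisField 2 n, x ^ 2 ^ n = x := by
    intro x; rw [← hcard]; exact FiniteField.pow_card x
  have hsq : w ^ 2 = w := by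
    rcases eq_or_lt_of_le (show 1 ≤ n from hn) with h1 | h1
    · subst h1; simpa using hpn w
    · obtain ⟨u, -, hu⟩ := Nat.exists_mul_mod_eq_one_of_coprime
        (Nat.coprime_comm.mp hcop) h1
      have hdiv : s * u = n * (s * u / n) + 1 := by
        conv_lhs => rw [← Nat.div_add_mod (s*u) n, hu]
      have h2 : w ^ 2 ^ (s * u) = w := pow_iter w s hw u
      rw [hdiv, pow_succ, pow_mul, pow_iter w n (hpn w) (s*u/n)] at h2
      exact h2
  have : w * (w - 1) = 0 := by
    have : w ^ 2 - w = 0 := by rw [hsq]; ring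
    calc w * (w - 1) = w ^ 2 - w := by ring
    _ = 0 := this
  rcases mul_eq_zero.mp this with h | h
  · exact Or.inl h
  · exact Or.inr (by rw [sub_eq_zero] at h; exact h)

lemma key_lemma (n s : ℕ) (hn : 0 < n) (hs : 0 < s) (hcop : Nat.gcd n s = 1) :
    ∀ (ν : ℕ) (r : ℕ → GaloisField 2 n), r ν ≠ 0 →
    Set.ncard {x : GaloisField 2 n |
      ∑ i ∈ Finset.range (ν + 1), r i * x ^ 2 ^ (s * i) = 0} ≤ 2 ^ ν := by
  classical
  intro ν
  induction ν with
  | zero =>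
    intro r hr
    have hset : {x : GaloisField 2 n |
        ∑ i ∈ Finset.range 1, r i * x ^ 2 ^ (s * i) = 0} ⊆ {0} := by
      intro x hx
      simp only [Set.mem_setOf_eq, Finset.sum_range_one, mul_zero, pow_zero, pow_one] at hx
      have := mul_eq_zero.mp hx
      rcases this with h | h
      · exact absurd h hr
      · exact h
    calc Set.ncard _ ≤ Set.ncard ({0} : Set (GaloisField 2 n)) :=
          Set.ncard_le_ncard hset (Set.finite_singleton 0)
    _ = 1 := Set.ncard_singleton 0
    _ ≤ 2 ^ 0 := by norm_num
  | succ ν ih =>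
    intro r hr
    set S : Set (GaloisField 2 n) :=
      {x | ∑ i ∈ Finset.range (ν + 2), r i * x ^ 2 ^ (s * i) = 0} with hS
    by_cases hex : ∃ a, a ∈ S ∧ a ≠ 0
    · obtain ⟨a, haS, ha0⟩ := hex
      set r' : ℕ → GaloisField 2 n := fun i => r i * a ^ 2 ^ (s * i) with hr'
      have h0 : ∑ i ∈ Finset.range (ν + 2), r' i = 0 := haS
      set m : ℕ → GaloisField 2 n := fun j => ∑ t ∈ Finset.Ioc j (ν + 1), r' t with hm
      have mlead : m ν ≠ 0 := by
        have : Finset.Ioc ν (ν + 1) = {ν + 1} := by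
          ext t; simp only [Finset.mem_Ioc, Finset.mem_singleton]; omega
        have hmν : m ν = r' (ν + 1) := by rw [hm]; simp [this]
        rw [hmν, hr']
        exact mul_ne_zero hr (pow_ne_zero _ ha0)
      -- the key identity
      have hident : ∀ z : GaloisField 2 n,
          ∑ i ∈ Finset.range (ν + 2), r' i * z ^ 2 ^ (s * i)
          = ∑ j ∈ Finset.range (ν + 1), m j * (z ^ 2 ^ s - z) ^ 2 ^ (s * j) := by
        intro z
        have step1 : ∀ j, (z ^ 2 ^ s - z) ^ 2 ^ (s * j)
            = z ^ 2 ^ (s * (j + 1)) - z ^ 2 ^ (s * j) := by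
          intro j
          rw [sub_pow_char_pow, ← pow_mul, ← pow_add]
          ring_nf
        have main : ∑ j ∈ Finset.range (ν + 1), m j * (z ^ 2 ^ s - z) ^ 2 ^ (s * j)
            = ∑ i ∈ Finset.range (ν + 2), r' i * z ^ 2 ^ (s * i) := by
          calc ∑ j ∈ Finset.range (ν + 1), m j * (z ^ 2 ^ s - z) ^ 2 ^ (s * j)
              = ∑ j ∈ Finset.range (ν + 1), ∑ t ∈ Finset.Ioc j (ν + 1),
                  r' t * (z ^ 2 ^ (s * (j + 1)) - z ^ 2 ^ (s * j)) := by
                refine Finset.sum_congr rfl fun j _ => ?_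
                rw [step1 j, hm]
                exact Finset.sum_mul _ _ _
          _ = ∑ t ∈ Finset.range (ν + 2), ∑ j ∈ Finset.range t,
                  r' t * (z ^ 2 ^ (s * (j + 1)) - z ^ 2 ^ (s * j)) := by
                refine Finset.sum_comm' ?_
                intro j t
                simp only [Finset.mem_range, Finset.mem_Ioc]
                omega
          _ = ∑ t ∈ Finset.range (ν + 2), r' t * (z ^ 2 ^ (s * t) - z) := by
                refine Finset.sum_congr rfl fun t _ => ?_
                rw [← Finset.mul_sum,
                  Finset.sum_range_sub (fun j => z ^ 2 ^ (s * j))]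
                simp
          _ = ∑ t ∈ Finset.range (ν + 2), r' t * z ^ 2 ^ (s * t)
                - (∑ t ∈ Finset.range (ν + 2), r' t) * z := by
                rw [Finset.sum_mul, ← Finset.sum_sub_distrib]
                refine Finset.sum_congr rfl fun t _ => ?_
                ring
          _ = ∑ i ∈ Finset.range (ν + 2), r' i * z ^ 2 ^ (s * i) := by
                rw [h0]; ring
        exact main.symm
      -- set Z and T
      set T : Set (GaloisField 2 n) :=
        {y | ∑ j ∈ Finset.range (ν + 1), m j * y ^ 2 ^ (s * j) = 0} with hT
      have hTcard : T.ncard ≤ 2 ^ ν := ih m mlead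
      set Z : Set (GaloisField 2 n) :=
        {z | ∑ i ∈ Finset.range (ν + 2), r' i * z ^ 2 ^ (s * i) = 0} with hZ
      -- S and Z have the same cardinality via z ↦ a * z
      have hSZ : S = (fun z => a * z) '' Z := by
        ext x
        simp only [Set.mem_image, hZ, Set.mem_setOf_eq, hS]
        constructor
        · intro hx
          refine ⟨a⁻¹ * x, ?_, by field_simp⟩
          have : ∀ i, r' i * (a⁻¹ * x) ^ 2 ^ (s * i) = r i * x ^ 2 ^ (s * i) := by
            intro i
            rw [hr']
            rw [mul_pow, inv_pow]
            field_simp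
          rw [Finset.sum_congr rfl fun i _ => this i]
          exact hx
        · rintro ⟨z, hz, rfl⟩
          have : ∀ i, r i * (a * z) ^ 2 ^ (s * i) = r' i * z ^ 2 ^ (s * i) := by
            intro i
            rw [hr', mul_pow]
            ring
          rw [Finset.sum_congr rfl fun i _ => this i]
          exact hz
      have hcardSZ : S.ncard = Z.ncard := by
        rw [hSZ]
        exact Set.ncard_image_of_injective Z (mul_right_injective₀ ha0)
      -- counting via the map ψ z = z^(2^s) - z
      set ψ : GaloisField 2 n → GaloisField 2 n := fun z => z ^ 2 ^ s - z with hψ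
      have hmaps : ∀ z ∈ Z, ψ z ∈ T := by
        intro z hz
        have h1 : ∑ j ∈ Finset.range (ν + 1), m j * (z ^ 2 ^ s - z) ^ 2 ^ (s * j) = 0 := by
          rw [← hident z]; exact hz
        exact h1
      have hfiber : ∀ z1 z2 : GaloisField 2 n, ψ z1 = ψ z2 → z1 = z2 ∨ z1 = z2 + 1 := by
        intro z1 z2 h
        have hw : (z1 - z2) ^ 2 ^ s = z1 - z2 := by
          rw [sub_pow_char_pow]
          simp only [hψ] at h
          linear_combination h
        rcases fix_lemma n s hn hs hcop _ hw with h0 | h1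
        · exact Or.inl (sub_eq_zero.mp h0)
        · exact Or.inr (by linear_combination h1)
      have hZfin : Z.Finite := Z.toFinite
      have hTfin : T.Finite := T.toFinite
      have hcount : hZfin.toFinset.card ≤ 2 * hTfin.toFinset.card := by
        apply Finset.card_le_mul_card_image_of_maps_to (f := ψ)
        · intro z hz
          rw [Set.Finite.mem_toFinset] at hz ⊢
          exact hmaps z hz
        · intro b _
          by_cases hne : ({z ∈ hZfin.toFinset | ψ z = b}).Nonempty
          · obtain ⟨z0, hz0⟩ := hne
            have hsub2 : {z ∈ hZfin.toFinset | ψ z = b} ⊆ {z0, z0 + 1} := by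
              intro z hz
              simp only [Finset.mem_filter] at hz hz0
              simp only [Finset.mem_insert, Finset.mem_singleton]
              rcases hfiber z z0 (hz.2.trans hz0.2.symm) with h | h
              · exact Or.inl h
              · exact Or.inr h
            calc ({z ∈ hZfin.toFinset | ψ z = b}).card
                ≤ ({z0, z0 + 1} : Finset (GaloisField 2 n)).card :=
                  Finset.card_le_card hsub2
            _ ≤ 2 := Finset.card_insert_le _ _ |>.trans (by simp)
          · rw [Finset.not_nonempty_iff_eq_empty] at hne
            rw [hne]
            simp
      calc S.ncard = Z.ncard := hcardSZ
      _ = hZfin.toFinset.card := Set.ncard_eq_toFinset_card Z hZfin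
      _ ≤ 2 * hTfin.toFinset.card := hcount
      _ = 2 * T.ncard := by rw [Set.ncard_eq_toFinset_card T hTfin]
      _ ≤ 2 * 2 ^ ν := by omega
      _ = 2 ^ (ν + 1) := by ring
    · push_neg at hex
      have hsub : S ⊆ {0} := fun x hx => by
        by_contra h
        exact h (hex x hx)
      calc S.ncard ≤ Set.ncard ({0} : Set (GaloisField 2 n)) :=
            Set.ncard_le_ncard hsub (Set.finite_singleton 0)
      _ = 1 := Set.ncard_singleton 0
      _ ≤ 2 ^ (ν + 1) := Nat.one_le_two_pow

theorem root_bound_linearized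
    (n s ν : ℕ) (hn : 0 < n) (hs : 0 < s) (hcop : Nat.gcd n s = 1)
    (r : Fin (ν + 1) → GaloisField 2 n) (hlead : r (Fin.last ν) ≠ 0) :
    Set.ncard {x : GaloisField 2 n |
      ∑ i : Fin (ν + 1), r i * x ^ (2 ^ (s * (i : ℕ))) = 0} ≤ 2 ^ ν := by
  classical
  set rbar : ℕ → GaloisField 2 n :=
    fun i => if h : i < ν + 1 then r ⟨i, h⟩ else 0 with hrbar
  have hlead' : rbar ν ≠ 0 := by
    have : rbar ν = r (Fin.last ν) := by
      rw [hrbar]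
      simp [Fin.last]
    rw [this]; exact hlead
  have hsets : {x : GaloisField 2 n |
      ∑ i : Fin (ν + 1), r i * x ^ (2 ^ (s * (i : ℕ))) = 0}
      = {x : GaloisField 2 n |
      ∑ i ∈ Finset.range (ν + 1), rbar i * x ^ 2 ^ (s * i) = 0} := by
    ext x
    simp only [Set.mem_setOf_eq]
    rw [Finset.sum_range fun i => rbar i * x ^ 2 ^ (s * i)]
    congr! 1
    apply Finset.sum_congr rfl
    intro i _
    rw [hrbar]
    simp [i.isLt]
  rw [hsets]
  exact key_lemma n s hn hs hcop ν rbar hlead'
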